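/- A NULL-terminated container shape has uniquely determined front and back regions: if G is a container shape (an SDLL with prev(front) = ⊥ and next(back) = ⊥) whose regions are pairwise distinct and whose DLS set only links consecutive regions, then no region other than the front has prev equal to ⊥ among the 'entry' positions and no region other than the back has next equal to ⊥ among the 'exit' positions; formally, the pair (front, back) is the unique pair (r, r') such that G is an SDLL with front r and back r' satisfying prev(r) = ⊥ and next(r') = ⊥. -/

import Mathlib

/-- Pointer values: a region, NULL (⊥), or the undefined value ⊤. -/
inductive PVal (R : Type) : Type
  | reg (r : R)
  | null
  | top

/-- A NULL-terminated container shape has uniquely determined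
front and back regions: no region other than the front has `prev = ⊥`, no
region other than the back has `next = ⊥`, and any enumeration of the same
region set satisfying the SDLL and NULL-termination conditions has the same
front and back. -/
theorem stmt19 {Region : Type}
    (next prev : Region → PVal Region) (D : Set (Region × Region))
    (n : ℕ) (hn : 1 ≤ n) (r : ℕ → Region)
    (hinj : ∀ i < n, ∀ j < n, r i = r j → i = j)
    (hD : ∀ p, p ∈ D ↔ ∃ i, i + 1 < n ∧ p = (r i, r (i+1)) ∧ next (r i) = PVal.top)
    (hsdll : ∀ i, i + 1 < n →
      ((next (r i) = PVal.reg (r (i+1)) ∧ prev (r (i+1)) = PVal.reg (r i)) ∨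
       ((r i, r (i+1)) ∈ D ∧ next (r i) = PVal.top ∧ prev (r (i+1)) = PVal.top)))
    (hfront : prev (r 0) = PVal.null)
    (hback : next (r (n-1)) = PVal.null) :
    (∀ i < n, (prev (r i) = PVal.null ↔ i = 0) ∧ (next (r i) = PVal.null ↔ i = n - 1)) ∧
    (∀ (m : ℕ) (r' : ℕ → Region), 1 ≤ m →
      (∀ i < m, ∀ j < m, r' i = r' j → i = j) →
      r' '' Set.Iio m = r '' Set.Iio n →
      (∀ i, i + 1 < m →
        ((next (r' i) = PVal.reg (r' (i+1)) ∧ prev (r' (i+1)) = PVal.reg (r' i)) ∨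
         ((r' i, r' (i+1)) ∈ D ∧ next (r' i) = PVal.top ∧ prev (r' (i+1)) = PVal.top))) →
      prev (r' 0) = PVal.null → next (r' (m-1)) = PVal.null →
      r' 0 = r 0 ∧ r' (m-1) = r (n-1)) := by
  have key : ∀ i < n, (prev (r i) = PVal.null ↔ i = 0) ∧ (next (r i) = PVal.null ↔ i = n - 1) := by
    intro i hi
    constructor
    · constructor
      · intro hp
        by_contra h0
        have h1 : 1 ≤ i := Nat.one_le_iff_ne_zero.mpr h0
        have : (i - 1) + 1 < n := by omega
        rcases hsdll (i - 1) this with ⟨_, h⟩ | ⟨_, _, h⟩ <;>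
          · rw [show (i - 1) + 1 = i by omega] at h; rw [hp] at h; cases h
      · intro h; subst h; exact hfront
    · constructor
      · intro hp
        by_contra h0
        have : i + 1 < n := by omega
        rcases hsdll i this with ⟨h, _⟩ | ⟨_, h, _⟩ <;> rw [hp] at h <;> cases h
      · intro h; subst h; exact hback
  refine ⟨key, ?_⟩
  intro m r' hm hinj' himg hsdll' hfront' hback'
  constructor
  · have h0 : r' 0 ∈ r '' Set.Iio n := by
      rw [← himg]; exact ⟨0, by simp; omega, rfl⟩
    obtain ⟨j, hj, hje⟩ := h0
    have : j = 0 := ((key j hj).1).mp (by rw [hje]; exact hfront')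
    rw [← hje, this]
  · have h0 : r' (m - 1) ∈ r '' Set.Iio n := by
      rw [← himg]; exact ⟨m - 1, by simp; omega, rfl⟩
    obtain ⟨j, hj, hje⟩ := h0
    have : j = n - 1 := ((key j hj).2).mp (by rw [hje]; exact hback')
    rw [← hje, this]
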